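/- arXiv:2112.11577 — 2 statements merged into one kernel-verified Lean document; each statement's English description precedes it below -/
import Mathlib

section
/- Let D ≥ 2, σ > 0, b > 0, and t : Fin D → ℝ such that t i ≠ t j for some pair of indices i ≠ j. Define ψ : ℝ → ℝ^D by ψ(s)_i = exp(−b(s − t i)²/(2σ²)). Then ψ is differentiable and its derivative ψ'(s) ∈ ℝ^D is nonzero for every s ∈ ℝ. -/
/-- Derivative of each component. -/
lemma superGaussian_component_hasDerivAt (σ b ti s : ℝ) :
    HasDerivAt (fun s : ℝ => Real.exp (-(b * (s - ti) ^ 2) / (2 * σ ^ 2)))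
      (Real.exp (-(b * (s - ti) ^ 2) / (2 * σ ^ 2)) *
        (-(b * (2 * (s - ti))) / (2 * σ ^ 2))) s := by
  have h1 : HasDerivAt (fun s : ℝ => s - ti) 1 s := (hasDerivAt_id s).sub_const ti
  have h2 : HasDerivAt (fun s : ℝ => (s - ti) ^ 2) (2 * (s - ti)) s := by
    simpa using h1.fun_pow 2
  have h3 : HasDerivAt (fun s : ℝ => -(b * (s - ti) ^ 2) / (2 * σ ^ 2))
      (-(b * (2 * (s - ti))) / (2 * σ ^ 2)) s :=
    ((h2.const_mul b).neg).div_const (2 * σ ^ 2)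
  exact h3.exp

/-- The scalar profile curve `ψ(s)_i = exp(−b(s − t i)²/(2σ²))` of the super-Gaussian
embedding is differentiable with nowhere-vanishing derivative, provided two centers
are distinct. -/
theorem superGaussian_profile_deriv_ne_zero
    (D : ℕ) (hD : 2 ≤ D) (σ b : ℝ) (hσ : 0 < σ) (hb : 0 < b)
    (t : Fin D → ℝ) (ht : ∃ i j : Fin D, i ≠ j ∧ t i ≠ t j)
    (ψ : ℝ → EuclideanSpace ℝ (Fin D))
    (hψ : ∀ s, ψ s = fun i : Fin D => Real.exp (-(b * (s - t i) ^ 2) / (2 * σ ^ 2))) :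
    Differentiable ℝ ψ ∧ ∀ s : ℝ, deriv ψ s ≠ 0 := by
  set d : ℝ → Fin D → ℝ := fun s i =>
    Real.exp (-(b * (s - t i) ^ 2) / (2 * σ ^ 2)) * (-(b * (2 * (s - t i))) / (2 * σ ^ 2))
    with hd
  have hψeq : ψ = ⇑(EuclideanSpace.equiv (Fin D) ℝ).symm ∘
      (fun s => fun i : Fin D => Real.exp (-(b * (s - t i) ^ 2) / (2 * σ ^ 2))) := by
    funext s
    rw [← WithLp.toLp_ofLp (x := ψ s), hψ s]
    rfl
  have key : ∀ s : ℝ, HasDerivAt ψ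
      ((EuclideanSpace.equiv (Fin D) ℝ).symm (d s)) s := by
    intro s
    have hg : HasDerivAt (fun s => (fun i : Fin D =>
        Real.exp (-(b * (s - t i) ^ 2) / (2 * σ ^ 2)))) (d s) s := by
      rw [hasDerivAt_pi]
      intro i
      exact superGaussian_component_hasDerivAt σ b (t i) s
    rw [hψeq]
    exact ((EuclideanSpace.equiv (Fin D) ℝ).symm.toContinuousLinearMap.hasFDerivAt).comp_hasDerivAt
      s hg
  constructor
  · intro s
    exact (key s).differentiableAt
  · intro s h
    rw [(key s).deriv] at h
    obtain ⟨i, j, hij, htij⟩ := ht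
    have hcomp : ∀ k : Fin D, d s k = 0 := by
      intro k
      have h' : (EuclideanSpace.equiv (Fin D) ℝ).symm (d s) k = 0 := by
        rw [h]; rfl
      simpa using h'
    have hzero : ∀ k : Fin D, d s k = 0 → s = t k := by
      intro k hk
      have hexp : Real.exp (-(b * (s - t k) ^ 2) / (2 * σ ^ 2)) ≠ 0 := Real.exp_ne_zero _
      have h2σ : (2 * σ ^ 2) ≠ 0 := by positivity
      have hq : -(b * (2 * (s - t k))) / (2 * σ ^ 2) = 0 := by
        rcases mul_eq_zero.mp hk with h | h
        · exact absurd h hexp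
        · exact h
      have hnum : -(b * (2 * (s - t k))) = 0 := by
        field_simp at hq
        linarith [hq]
      have hb' : b ≠ 0 := ne_of_gt hb
      nlinarith [hnum]
    have h1 := hzero i (hcomp i)
    have h2 := hzero j (hcomp j)
    exact htij (by linarith)
end

section
/- Let D ≥ 2, σ > 0, b > 0, and t : Fin D → ℝ such that t i ≠ t j for some pair of indices i ≠ j. Define ψ : ℝ → ℝ^D by ψ(s)_i = exp(−b(s − t i)²/(2σ²)). Then for every compact set K ⊆ ℝ, the restriction of ψ to K is a homeomorphism onto its image ψ(K) (equivalently, the restricted map K → ℝ^D is a topological embedding). -/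
lemma superGaussian_inj (D : ℕ) (σ b : ℝ) (hσ : 0 < σ) (hb : 0 < b)
    (t : Fin D → ℝ) (ht : ∃ i j : Fin D, i ≠ j ∧ t i ≠ t j)
    (ψ : ℝ → EuclideanSpace ℝ (Fin D))
    (hψ : ∀ s, ψ s = fun i : Fin D => Real.exp (-(b * (s - t i) ^ 2) / (2 * σ ^ 2))) :
    Function.Injective ψ := by
  intro s s' h
  by_contra hne
  obtain ⟨i, j, hij, htij⟩ := ht
  have key : ∀ k : Fin D, (s - t k) ^ 2 = (s' - t k) ^ 2 := by
    intro k
    have hk : ψ s k = ψ s' k := by rw [h]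
    rw [hψ s, hψ s'] at hk
    simp only at hk
    have := Real.exp_injective hk
    have h2σ : (2 * σ ^ 2) ≠ 0 := by positivity
    field_simp at this
    linarith
  have hmid : ∀ k : Fin D, t k = (s + s') / 2 := by
    intro k
    have hk := key k
    have : (s - t k - (s' - t k)) * (s - t k + (s' - t k)) = 0 := by ring_nf; nlinarith [hk]
    rcases mul_eq_zero.mp this with h1 | h2
    · exact absurd (by linarith) hne
    · linarith
  exact htij ((hmid i).trans (hmid j).symm)

/-- The scalar profile curve `ψ(s)_i = exp(−b(s − t i)²/(2σ²))` of the super-Gaussian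
embedding, restricted to any compact set `K ⊆ ℝ`, is a topological embedding
(homeomorphism onto its image). -/
theorem superGaussian_profile_embedding_on_compact
    (D : ℕ) (hD : 2 ≤ D) (σ b : ℝ) (hσ : 0 < σ) (hb : 0 < b)
    (t : Fin D → ℝ) (ht : ∃ i j : Fin D, i ≠ j ∧ t i ≠ t j)
    (ψ : ℝ → EuclideanSpace ℝ (Fin D))
    (hψ : ∀ s, ψ s = fun i : Fin D => Real.exp (-(b * (s - t i) ^ 2) / (2 * σ ^ 2))) :
    ∀ K : Set ℝ, IsCompact K → Topology.IsEmbedding (fun x : K => ψ x) := by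
  intro K hK
  haveI : CompactSpace K := isCompact_iff_compactSpace.mp hK
  have hcont : Continuous ψ := by
    have hψ' : ψ = fun s => (WithLp.equiv 2 (Fin D → ℝ)).symm
        (fun i : Fin D => Real.exp (-(b * (s - t i) ^ 2) / (2 * σ ^ 2))) := by
      funext s; rw [← hψ s]; rfl
    rw [hψ']
    exact (PiLp.continuous_toLp 2 fun _ : Fin D => ℝ).comp
      (continuous_pi fun i => by fun_prop)
  have hinj := superGaussian_inj D σ b hσ hb t ht ψ hψ
  exact ((hcont.comp continuous_subtype_val).isClosedEmbedding
    fun a b h => Subtype.ext (hinj h)).isEmbedding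
end
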